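/- Let m ≥ 1, q ≥ 0, n = q + 1, and c = 2π/m; write S¹ = ℝ/2πℤ, B = ℝ/cℤ, and π : S¹ → B the natural projection. Let X(n) be the subspace of (S¹)^n × [0, c]^n of tuples ((ζ_j)_j, (φ_j)_j) with π(ζ_{j+1 mod n}) = π(ζ_j) + φ̄_j for all j and φ_0 + … + φ_{n−1} = c. Let Λ = AddCircle ((m : ℝ)) × Δ with Δ the standard q-simplex, and τ : Λ → Λ the homeomorphism τ(r̄, t) = (r̄ − t̄_q, (t_q, t_0, …, t_{q−1})). Let W = (Fin n → ZMod m) ⋊ Z_n, where Z_n = ⟨σ_0⟩ ⊆ Perm(Fin n) is generated by the cyclic permutation σ_0 : i ↦ i+1 (mod n), act on X(n) by: v : Fin n → ZMod m acts by (ζ_j)_j ↦ (ζ_j + (c·ṽ(j))‾)_j (ṽ any integer lift, well defined since c·m = 2π) fixing the φ_j, and σ_0 acts by ((ζ_j)_j, (φ_j)_j) ↦ ((ζ_{j−1 mod n})_j, (φ_{j−1 mod n})_j); set υ = (v_0, σ_0) ∈ W with v_0(0) = −1 and v_0(i) = 0 for i ≠ 0. Define Φ : Λ → X(n) by Φ(r̄,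 t) = ((ζ_j)_j, (φ_j)_j) with ζ_j = ((2π/m)·(r + t_0 + … + t_{j−1}))‾ and φ_j = (2π/m)·t_j. Then: (i) Φ is well defined, continuous, and injective; (ii) Φ ∘ τ = υ · Φ, i.e. Φ intertwines τ with the action of υ; (iii) the map Λ × W → X(n), (λ, w) ↦ w·Φ(λ), descends to a homeomorphism from the balanced product (Λ × W)/∼ to X(n), where ∼ is generated by (λ, w) ∼ (τ(λ), w·υ⁻¹) (an action of ℤ/(m·n), since τ^{mn} = id and υ^{mn} = 1); moreover this homeomorphism is equivariant for the left W-actions (W acting on the quotient by w′·[(λ, w)] = [(λ, w′·w)]) and intertwines translation by a ∈ ℝ in the AddCircle m coordinate of Λ with simultaneous translation of all ζ_j by ((2π/m)·a)‾. -/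

import Mathlib

noncomputable section

open Set Equiv

namespace Stmt14

/-- The additive circle `S¹ = ℝ/2πℤ`. -/
abbrev S1 : Type := AddCircle (2 * Real.pi)

/-- The additive circle `B = ℝ/(2π/m)ℤ`, modeling `S¹/C_m`. -/
abbrev CircB (m : ℕ) : Type := AddCircle (2 * Real.pi / m)

/-- The space `X(n)` of tuples `((ζ_j)_j, (φ_j)_j)` with `φ_j ∈ [0, c]`,
`π(ζ_{j+1}) = π(ζ_j) + φ̄_j`, and `φ_0 + … + φ_{n−1} = c` (where `c = 2π/m`). -/
def Xn (m n : ℕ) [NeZero n] (pr : S1 → CircB m) :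
    Set ((Fin n → S1) × (Fin n → ℝ)) :=
  {x | (∀ j, x.2 j ∈ Icc 0 (2 * Real.pi / m)) ∧
    (∀ j, pr (x.1 (j + 1)) = pr (x.1 j) + ((x.2 j : ℝ) : CircB m)) ∧
    ∑ j, x.2 j = 2 * Real.pi / m}

/-- `Λ = AddCircle m × Δ_q`, where `Δ_q` is the standard `q`-simplex. -/
def Lam (m q : ℕ) : Set (AddCircle (m : ℝ) × (Fin (q + 1) → ℝ)) :=
  {p | (∀ j, 0 ≤ p.2 j) ∧ ∑ j, p.2 j = 1}

/-- The ambient twist map `τ(r̄, t) = (r̄ − t̄_q, (t_q, t_0, …, t_{q−1}))`. -/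
def tauMap (m q : ℕ) :
    AddCircle (m : ℝ) × (Fin (q + 1) → ℝ) → AddCircle (m : ℝ) × (Fin (q + 1) → ℝ) :=
  fun p => (p.1 - ((p.2 (Fin.last q) : ℝ) : AddCircle (m : ℝ)), fun j => p.2 (j - 1))

/-- The homomorphism `Perm (Fin n) →* MulAut (Fin n → Multiplicative (ZMod m))` by which
a permutation `σ` acts on a function `v` via `(σ · v)(i) = v (σ⁻¹ i)`. -/
def permHom (m n : ℕ) : Perm (Fin n) →* MulAut (Fin n → Multiplicative (ZMod m)) where
  toFun σ :=
    { toFun := fun v i => v (σ⁻¹ i)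
      invFun := fun v i => v (σ i)
      left_inv := fun v => funext fun i => by simp
      right_inv := fun v => funext fun i => by simp
      map_mul' := fun v w => rfl }
  map_one' := by
    ext v i
    simp
  map_mul' := fun σ τ => by
    ext v i
    simp [mul_inv_rev]

/-- The wreath product `W = (Fin n → ZMod m) ⋊ Z_n`, where `Z_n = ⟨σ₀⟩ ≤ Σ_n` is the
cyclic group generated by `σ₀ : i ↦ i + 1`. -/
abbrev Wgrp (m q : ℕ) : Type :=
  SemidirectProduct (Fin (q + 1) → Multiplicative (ZMod m))
    ↥(Subgroup.zpowers (finRotate (q + 1)))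
    ((permHom m (q + 1)).comp (Subgroup.subtype _))

instance (m q : ℕ) : TopologicalSpace (Wgrp m q) := ⊥

/-- The action of `w = (v, σ) ∈ W` on `X(n)`: first reindex by the cyclic permutation
`σ` (i.e. `ζ'_j = ζ_{σ⁻¹ j}`, `φ'_j = φ_{σ⁻¹ j}`), then translate each `ζ'_j` by
`(c · ṽ(j))‾` (`ṽ` an integer lift of `v`, well defined since `c·m = 2π`). -/
def wAct (m q : ℕ) (w : Wgrp m q) (x : (Fin (q + 1) → S1) × (Fin (q + 1) → ℝ)) :
    (Fin (q + 1) → S1) × (Fin (q + 1) → ℝ) :=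
  (fun j => x.1 (((w.right : Perm (Fin (q + 1))))⁻¹ j) +
      ((2 * Real.pi / m * ((Multiplicative.toAdd (w.left j)).val : ℝ) : ℝ) : S1),
    fun j => x.2 (((w.right : Perm (Fin (q + 1))))⁻¹ j))

/-- The element `υ = (v₀, σ₀)` with `v₀(0) = −1` and `v₀(i) = 0` for `i ≠ 0`. -/
def upsilon (m q : ℕ) : Wgrp m q :=
  ⟨fun i => Multiplicative.ofAdd (if i = 0 then (-1 : ZMod m) else 0),
    ⟨finRotate (q + 1), Subgroup.mem_zpowers _⟩⟩

/-- The comparison map `Φ(r̄, t) = ((ζ_j)_j, (φ_j)_j)` with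
`ζ_j = ((2π/m)·(r + t_0 + … + t_{j−1}))‾` and `φ_j = (2π/m)·t_j`, expressed using the
map `scale : ℝ/mℤ → ℝ/2πℤ` induced by multiplication by `2π/m`. -/
def PhiMap (m q : ℕ) (scale : AddCircle (m : ℝ) → S1)
    (p : AddCircle (m : ℝ) × (Fin (q + 1) → ℝ)) :
    (Fin (q + 1) → S1) × (Fin (q + 1) → ℝ) :=
  (fun j => scale p.1 + ((2 * Real.pi / m * ∑ i ∈ Finset.Iio j, p.2 i : ℝ) : S1),
    fun j => 2 * Real.pi / m * p.2 j)

/-- The relation defining the balanced product `Λ ×_{C_{m(q+1)}} W`: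
`(λ, w) ∼ (τ(λ), w·υ⁻¹)`. -/
def balRel (m q : ℕ) :
    (↥(Lam m q) × Wgrp m q) → (↥(Lam m q) × Wgrp m q) → Prop :=
  fun p p' => (p'.1 : AddCircle (m : ℝ) × (Fin (q + 1) → ℝ)) = tauMap m q p.1.val ∧
    p'.2 = p.2 * (upsilon m q)⁻¹

open scoped Fin.NatCast Fin.IntCast Fin.CommRing

section Helpers

lemma coe_eq_iff' (p a b : ℝ) :
    ((a : ℝ) : AddCircle p) = ((b : ℝ) : AddCircle p) ↔ ∃ z : ℤ, a - b = z * p := by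
  rw [← sub_eq_zero, ← AddCircle.coe_sub, AddCircle.coe_eq_zero_iff]
  constructor
  · rintro ⟨z, hz⟩; exact ⟨z, by rw [← hz]; simp [zsmul_eq_mul]⟩
  · rintro ⟨z, hz⟩; exact ⟨z, by rw [hz]; simp [zsmul_eq_mul]⟩

lemma c_pos {m : ℕ} (hm : 1 ≤ m) : 0 < 2 * Real.pi / m :=
  div_pos (by positivity) (by exact_mod_cast hm)

lemma cm_eq {m : ℕ} (hm : 1 ≤ m) : 2 * Real.pi / m * m = 2 * Real.pi := by
  have : (m : ℝ) ≠ 0 := by positivity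
  field_simp

/-- translate by an integer multiple of `m` inside the scaled coercion -/
lemma coe_c_eq {m : ℕ} (hm : 1 ≤ m) {x y : ℝ} (z : ℤ) (h : x - y = z * m) :
    ((2 * Real.pi / m * x : ℝ) : S1) = ((2 * Real.pi / m * y : ℝ) : S1) := by
  rw [coe_eq_iff']
  refine ⟨z, ?_⟩
  rw [← mul_sub, h, show 2 * Real.pi / m * ((z : ℝ) * m) = (z : ℝ) * (2 * Real.pi / m * m) by
    ring, cm_eq hm]

lemma coe_c_val {m : ℕ} (hm : 1 ≤ m) (a : ZMod m) (z : ℤ) (hz : (z : ZMod m) = a) :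
    ((2 * Real.pi / m * (a.val : ℝ) : ℝ) : S1) = ((2 * Real.pi / m * (z : ℝ) : ℝ) : S1) := by
  haveI : NeZero m := ⟨by omega⟩
  have h1 : (((a.val : ℤ) - z : ℤ) : ZMod m) = 0 := by
    push_cast [ZMod.natCast_val, ZMod.cast_id, hz]; ring
  obtain ⟨k, hk⟩ := (ZMod.intCast_zmod_eq_zero_iff_dvd _ _).mp h1
  exact coe_c_eq hm k (by exact_mod_cast hk.trans (mul_comm (m:ℤ) k))

lemma sum_Iio_eq {q : ℕ} (f : Fin (q + 1) → ℝ) (j : Fin (q + 1)) :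
    ∑ i ∈ Finset.Iio j, f i = ∑ i ∈ Finset.range j.val, f (i : Fin (q + 1)) := by
  refine Finset.sum_nbij' (fun i => (i : ℕ)) (fun i => (i : Fin (q + 1))) ?_ ?_ ?_ ?_ ?_
  · intro i hi; simp only [Finset.mem_Iio] at hi; simp only [Finset.mem_range]; exact hi
  · intro i hi
    simp only [Finset.mem_range] at hi
    have h2 : i < q + 1 := by omega
    simp only [Finset.mem_Iio, Fin.lt_def, Fin.val_cast_of_lt h2]
    exact hi
  · intro i _; exact Fin.cast_val_eq_self i
  · intro i hi; simp only [Finset.mem_range] at hi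
    have h2 : i < q + 1 := by omega
    simp [Fin.val_cast_of_lt h2]
  · intro i hi
    simp only [Finset.mem_Iio] at hi
    congr 1
    simp [Fin.cast_val_eq_self]

end Helpers
section Helpers2

lemma finRotate_pow_apply {q : ℕ} (k : ℕ) (j : Fin (q + 1)) :
    ((finRotate (q + 1)) ^ k) j = j + (k : Fin (q + 1)) := by
  induction k with
  | zero => simp
  | succ k ih =>
    rw [pow_succ', Equiv.Perm.mul_apply, ih, finRotate_succ_apply]
    push_cast
    ring

lemma finRotate_inv_apply {q : ℕ} (j : Fin (q + 1)) :
    (finRotate (q + 1))⁻¹ j = j - 1 := by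
  rw [Equiv.Perm.inv_eq_iff_eq, finRotate_succ_apply]
  ring

lemma finRotate_pow_n {q : ℕ} : (finRotate (q + 1)) ^ (q + 1) = 1 := by
  ext j
  simp [finRotate_pow_apply, Fin.natCast_self]

lemma finRotate_pow_inv_apply {q : ℕ} (k : ℕ) (j : Fin (q + 1)) :
    (((finRotate (q + 1)) ^ k)⁻¹) j = j - (k : Fin (q + 1)) := by
  rw [Equiv.Perm.inv_eq_iff_eq, finRotate_pow_apply]
  ring

lemma zero_sub_one_eq_last {q : ℕ} : (0 : Fin (q + 1)) - 1 = Fin.last q := by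
  apply Fin.ext
  rw [Fin.coe_sub_one]
  simp

/-- normal form of the first component of `PhiMap` -/
lemma phi_fst {m q : ℕ} (scale : AddCircle (m : ℝ) → S1)
    (hscale : ∀ r : ℝ, scale ((r : ℝ) : AddCircle (m : ℝ)) = ((2 * Real.pi / m * r : ℝ) : S1))
    (r : ℝ) (t : Fin (q + 1) → ℝ) (j : Fin (q + 1)) :
    (PhiMap m q scale (((r : ℝ) : AddCircle (m : ℝ)), t)).1 j =
      ((2 * Real.pi / m * (r + ∑ i ∈ Finset.range j.val, t (i : Fin (q + 1))) : ℝ) : S1) := by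
  show scale _ + _ = _
  rw [hscale, ← AddCircle.coe_add, sum_Iio_eq]
  congr 1
  ring

lemma phi_snd {m q : ℕ} (scale : AddCircle (m : ℝ) → S1)
    (p : AddCircle (m : ℝ) × (Fin (q + 1) → ℝ)) (j : Fin (q + 1)) :
    (PhiMap m q scale p).2 j = 2 * Real.pi / m * p.2 j := rfl

lemma lam_le_one {q : ℕ} {t : Fin (q + 1) → ℝ} (h0 : ∀ j, 0 ≤ t j)
    (h1 : ∑ j, t j = 1) (j : Fin (q + 1)) : t j ≤ 1 := by
  rw [← h1]
  exact Finset.single_le_sum (fun i _ => h0 i) (Finset.mem_univ j)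

lemma wAct_fst {m q : ℕ} (w : Wgrp m q) (x : (Fin (q + 1) → S1) × (Fin (q + 1) → ℝ))
    (j : Fin (q + 1)) :
    (wAct m q w x).1 j = x.1 (((w.right : Perm (Fin (q + 1))))⁻¹ j) +
      ((2 * Real.pi / m * ((Multiplicative.toAdd (w.left j)).val : ℝ) : ℝ) : S1) := rfl

lemma wAct_snd {m q : ℕ} (w : Wgrp m q) (x : (Fin (q + 1) → S1) × (Fin (q + 1) → ℝ))
    (j : Fin (q + 1)) :
    (wAct m q w x).2 j = x.2 (((w.right : Perm (Fin (q + 1))))⁻¹ j) := rfl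

lemma wAct_one {m q : ℕ} (hm : 1 ≤ m) (x : (Fin (q + 1) → S1) × (Fin (q + 1) → ℝ)) :
    wAct m q 1 x = x := by
  haveI : NeZero m := ⟨by omega⟩
  refine Prod.ext ?_ ?_
  · funext j
    rw [wAct_fst]
    simp [ZMod.val_zero]
  · funext j
    rw [wAct_snd]
    simp

lemma coe_c_val_add {m : ℕ} (hm : 1 ≤ m) (a b : ZMod m) :
    ((2 * Real.pi / m * (((a + b).val : ℕ) : ℝ) : ℝ) : S1) =
      ((2 * Real.pi / m * ((a.val : ℕ) : ℝ) : ℝ) : S1) +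
        ((2 * Real.pi / m * ((b.val : ℕ) : ℝ) : ℝ) : S1) := by
  haveI : NeZero m := ⟨by omega⟩
  have hd := Nat.mod_add_div (a.val + b.val) m
  have h1 : ((2 * Real.pi / m * (((a + b).val : ℕ) : ℝ) : ℝ) : S1) =
      ((2 * Real.pi / m * (((a.val + b.val : ℕ) : ℕ) : ℝ) : ℝ) : S1) :=
    coe_c_eq hm (-(((a.val + b.val) / m : ℕ) : ℤ)) (by
      have hd' : (((a.val + b.val) % m : ℕ) : ℝ) + (m : ℝ) * (((a.val + b.val) / m : ℕ) : ℝ)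
          = ((a.val + b.val : ℕ) : ℝ) := by exact_mod_cast hd
      rw [ZMod.val_add, Int.cast_neg, Int.cast_natCast, Nat.cast_add]
      push_cast at hd'
      linarith)
  rw [h1, ← AddCircle.coe_add]
  congr 1
  push_cast
  ring

lemma wAct_mul {m q : ℕ} (hm : 1 ≤ m) (w w' : Wgrp m q)
    (x : (Fin (q + 1) → S1) × (Fin (q + 1) → ℝ)) :
    wAct m q (w * w') x = wAct m q w (wAct m q w' x) := by
  haveI : NeZero m := ⟨by omega⟩
  refine Prod.ext ?_ ?_
  · funext j
    rw [wAct_fst, wAct_fst, wAct_fst]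
    have hl : Multiplicative.toAdd ((w * w').left j)
        = Multiplicative.toAdd (w.left j) +
          Multiplicative.toAdd (w'.left (((w.right : Perm (Fin (q + 1))))⁻¹ j)) := by
      rw [SemidirectProduct.mul_left]; rfl
    have hr : (((w * w').right : Perm (Fin (q + 1))))⁻¹ j
        = ((w'.right : Perm (Fin (q + 1))))⁻¹ (((w.right : Perm (Fin (q + 1))))⁻¹ j) := by
      simp [SemidirectProduct.mul_right, mul_inv_rev]
    rw [hl, coe_c_val_add hm, hr, add_assoc]
    congr 1
    exact add_comm _ _
  · funext j
    rw [wAct_snd, wAct_snd, wAct_snd]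
    congr 1

end Helpers2
section Helpers3

lemma exists_lift {p : ℝ} (x : AddCircle p) : ∃ r : ℝ, ((r : ℝ) : AddCircle p) = x :=
  QuotientAddGroup.mk_surjective x

lemma sum_range_fin_cast {q : ℕ} (t : Fin (q + 1) → ℝ) :
    ∑ i ∈ Finset.range (q + 1), t (i : Fin (q + 1)) = ∑ j, t j := by
  rw [← Fin.sum_univ_eq_sum_range (fun i => t (i : Fin (q + 1))) (q + 1)]
  exact Finset.sum_congr rfl fun i _ => by rw [Fin.cast_val_eq_self]

lemma last_cast {q : ℕ} : ((q : ℕ) : Fin (q + 1)) = Fin.last q := by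
  apply Fin.ext
  simp [Fin.val_cast_of_lt (Nat.lt_succ_self q)]

lemma sum_q_add_last {q : ℕ} {t : Fin (q + 1) → ℝ} (h1 : ∑ j, t j = 1) :
    ∑ i ∈ Finset.range q, t (i : Fin (q + 1)) + t (Fin.last q) = 1 := by
  rw [← last_cast, ← Finset.sum_range_succ (fun i => t (i : Fin (q + 1))) q,
    sum_range_fin_cast, h1]

lemma phi_mapsTo {m q : ℕ} (hm : 1 ≤ m) (pr : S1 → CircB m)
    (hpr : ∀ s : ℝ, pr ((s : ℝ) : S1) = ((s : ℝ) : CircB m))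
    (scale : AddCircle (m : ℝ) → S1)
    (hscale : ∀ r : ℝ, scale ((r : ℝ) : AddCircle (m : ℝ)) = ((2 * Real.pi / m * r : ℝ) : S1)) :
    Set.MapsTo (PhiMap m q scale) (Lam m q) (Xn m (q + 1) pr) := by
  rintro ⟨ρ, t⟩ ⟨h0, h1⟩
  obtain ⟨r, rfl⟩ := exists_lift ρ
  have hc := c_pos hm
  refine ⟨?_, ?_, ?_⟩
  · intro j
    refine ⟨mul_nonneg hc.le (h0 j), ?_⟩
    calc 2 * Real.pi / m * t j ≤ 2 * Real.pi / m * 1 :=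
          mul_le_mul_of_nonneg_left (lam_le_one h0 h1 j) hc.le
      _ = 2 * Real.pi / m := mul_one _
  · intro j
    rw [phi_fst scale hscale, phi_fst scale hscale, hpr, hpr]
    show _ = _ + ((2 * Real.pi / m * t j : ℝ) : CircB m)
    rw [← AddCircle.coe_add]
    by_cases hj : j = Fin.last q
    · subst hj
      rw [Fin.last_add_one]
      rw [coe_eq_iff']
      refine ⟨-1, ?_⟩
      have hS := sum_q_add_last h1
      show 2 * Real.pi / m * (r + ∑ i ∈ Finset.range (0 : Fin (q+1)).val, t (i : Fin (q + 1)))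
          - _ = _
      rw [show ((0 : Fin (q+1)).val) = 0 from rfl, Finset.sum_range_zero]
      have : (Fin.last q).val = q := rfl
      rw [this]
      nlinarith [hS]
    · have hval : (j + 1).val = j.val + 1 := by
        rw [Fin.val_add_one]
        simp [hj]
      rw [coe_eq_iff']
      refine ⟨0, ?_⟩
      rw [hval, Finset.sum_range_succ, Fin.cast_val_eq_self]
      ring
  · show ∑ j, 2 * Real.pi / m * t j = _
    rw [← Finset.mul_sum, h1, mul_one]

lemma phi_injOn {m q : ℕ} (hm : 1 ≤ m) (scale : AddCircle (m : ℝ) → S1)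
    (hscale : ∀ r : ℝ, scale ((r : ℝ) : AddCircle (m : ℝ)) = ((2 * Real.pi / m * r : ℝ) : S1)) :
    Set.InjOn (PhiMap m q scale) (Lam m q) := by
  have hc := c_pos hm
  rintro ⟨ρ, t⟩ _ ⟨ρ', t'⟩ _ h
  obtain ⟨r, rfl⟩ := exists_lift ρ
  obtain ⟨r', rfl⟩ := exists_lift ρ'
  have ht : t = t' := by
    funext j
    have := congrFun (congrArg Prod.snd h) j
    rw [phi_snd, phi_snd] at this
    exact mul_left_cancel₀ hc.ne' this
  have hr := congrFun (congrArg Prod.fst h) (0 : Fin (q + 1))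
  rw [phi_fst scale hscale, phi_fst scale hscale] at hr
  rw [show ((0 : Fin (q+1)).val) = 0 from rfl, Finset.sum_range_zero] at hr
  rw [coe_eq_iff'] at hr
  obtain ⟨z, hz⟩ := hr
  have hrr : r - r' = z * m := by
    have hcm := cm_eq hm
    have h2 : 2 * Real.pi / m * (r - r') = 2 * Real.pi / m * (z * m) := by
      rw [show 2 * Real.pi / m * ((z:ℝ) * m) = (z:ℝ) * (2 * Real.pi / m * m) by ring, hcm]
      rw [mul_sub]
      linarith [hz]
    exact mul_left_cancel₀ hc.ne' h2
  have : ((r : ℝ) : AddCircle (m : ℝ)) = ((r' : ℝ) : AddCircle (m : ℝ)) := by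
    rw [coe_eq_iff']
    exact ⟨z, hrr⟩
  rw [Prod.mk.injEq]
  exact ⟨this, ht⟩

/-- statement (ii) -/
lemma phi_tau {m q : ℕ} (hm : 1 ≤ m) (scale : AddCircle (m : ℝ) → S1)
    (hscale : ∀ r : ℝ, scale ((r : ℝ) : AddCircle (m : ℝ)) = ((2 * Real.pi / m * r : ℝ) : S1)) :
    ∀ p ∈ Lam m q,
      PhiMap m q scale (tauMap m q p) = wAct m q (upsilon m q) (PhiMap m q scale p) := by
  haveI : NeZero m := ⟨by omega⟩
  rintro ⟨ρ, t⟩ ⟨h0, h1⟩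
  obtain ⟨r, rfl⟩ := exists_lift ρ
  change ∀ j, 0 ≤ t j at h0
  change ∑ j, t j = 1 at h1
  have hups_right : ((upsilon m q).right : Perm (Fin (q + 1))) = finRotate (q + 1) := rfl
  refine Prod.ext ?_ ?_
  · funext j
    have htau : tauMap m q (((r : ℝ) : AddCircle (m : ℝ)), t) =
        (((r - t (Fin.last q) : ℝ) : AddCircle (m : ℝ)), fun i => t (i - 1)) := by
      rw [tauMap, AddCircle.coe_sub]
    rw [htau, phi_fst scale hscale, wAct_fst, hups_right, finRotate_inv_apply,
      phi_fst scale hscale]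
    by_cases hj : j = 0
    · subst hj
      rw [show ((0 : Fin (q+1)).val) = 0 from rfl, Finset.sum_range_zero,
        zero_sub_one_eq_last]
      have hv : Multiplicative.toAdd ((upsilon m q).left (0 : Fin (q + 1)))
          = (-1 : ZMod m) := by
        show Multiplicative.toAdd (Multiplicative.ofAdd _) = _
        simp
      rw [hv, coe_c_val hm (-1 : ZMod m) (-1 : ℤ) (by push_cast; ring), ← AddCircle.coe_add]
      have hS := sum_q_add_last h1
      have hlast : (Fin.last q).val = q := rfl
      rw [hlast]
      congr 1
      have e : ∑ i ∈ Finset.range q, t (i : Fin (q + 1)) = 1 - t (Fin.last q) := by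
        linarith [hS]
      rw [e]
      push_cast
      ring
    · have hv : Multiplicative.toAdd ((upsilon m q).left j) = (0 : ZMod m) := by
        show Multiplicative.toAdd (Multiplicative.ofAdd _) = _
        simp [hj]
      rw [hv, ZMod.val_zero]
      rw [show ((2 * Real.pi / m * ((0 : ℕ) : ℝ) : ℝ) : S1) = 0 by norm_num, add_zero]
      obtain ⟨k, hk⟩ : ∃ k, j.val = k + 1 :=
        Nat.exists_eq_succ_of_ne_zero (fun h0 => hj (Fin.ext h0))
      have hj1 : (j - 1).val = k := by
        rw [Fin.coe_sub_one, if_neg hj, hk]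
        omega
      have hsum : ∑ i ∈ Finset.range j.val, t ((i : Fin (q + 1)) - 1)
          = ∑ i ∈ Finset.range k, t (i : Fin (q + 1)) + t (Fin.last q) := by
        rw [hk, Finset.sum_range_succ' (fun i => t ((i : Fin (q + 1)) - 1)) k]
        congr 1
        · apply Finset.sum_congr rfl
          intro i _
          congr 1
          push_cast
          ring
        · rw [Nat.cast_zero, zero_sub_one_eq_last]
      rw [hsum, hj1]
      congr 1
      ring
  · funext j
    rw [phi_snd, wAct_snd, phi_snd, hups_right, finRotate_inv_apply]
    rfl

end Helpers3
section Helpers4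

lemma tau_mem {m q : ℕ} {p : AddCircle (m : ℝ) × (Fin (q + 1) → ℝ)} (hp : p ∈ Lam m q) :
    tauMap m q p ∈ Lam m q := by
  obtain ⟨h0, h1⟩ := hp
  refine ⟨fun j => h0 _, ?_⟩
  show ∑ j, p.2 (j - 1) = 1
  rw [← h1]
  exact Equiv.sum_comp (Equiv.subRight (1 : Fin (q + 1))) p.2

def tauSub (m q : ℕ) : ↥(Lam m q) → ↥(Lam m q) := fun l => ⟨tauMap m q l.val, tau_mem l.prop⟩

lemma tauSub_iter_val {m q : ℕ} (k : ℕ) (l : ↥(Lam m q)) :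
    ((tauSub m q)^[k] l).val = (tauMap m q)^[k] l.val := by
  induction k generalizing l with
  | zero => rfl
  | succ k ih =>
    rw [Function.iterate_succ_apply, Function.iterate_succ_apply, ih (tauSub m q l)]
    rfl

lemma ups_right_pow {m q : ℕ} (k : ℕ) :
    (((upsilon m q) ^ k).right : Perm (Fin (q + 1))) = (finRotate (q + 1)) ^ k := by
  induction k with
  | zero => rfl
  | succ k ih =>
    rw [pow_succ, pow_succ, SemidirectProduct.mul_right, ← ih]
    rfl

lemma ups_pow_left {m q : ℕ} (k : ℕ) (i : Fin (q + 1)) :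
    Multiplicative.toAdd (((upsilon m q) ^ k).left i)
      = -(∑ s ∈ Finset.range k, if ((s : ℕ) : Fin (q + 1)) = i then (1 : ZMod m) else 0) := by
  induction k with
  | zero => simp
  | succ k ih =>
    rw [pow_succ, SemidirectProduct.mul_left]
    have happ : ((permHom m (q + 1)).comp
          (Subgroup.subtype _) ((upsilon m q ^ k).right)) (upsilon m q).left i
        = Multiplicative.ofAdd (if ((k : ℕ) : Fin (q + 1)) = i then (-1 : ZMod m) else 0) := by
      show (upsilon m q).left (((((upsilon m q) ^ k).right : Perm (Fin (q + 1))))⁻¹ i) = _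
      rw [ups_right_pow, finRotate_pow_inv_apply]
      show Multiplicative.ofAdd (if i - (k : Fin (q + 1)) = 0 then (-1 : ZMod m) else 0) = _
      by_cases hki : ((k : ℕ) : Fin (q + 1)) = i
      · rw [if_pos (sub_eq_zero.mpr hki.symm), if_pos hki]
      · rw [if_neg (fun hc => hki (sub_eq_zero.mp hc).symm), if_neg hki]
    rw [Pi.mul_apply, toAdd_mul, ih, happ, toAdd_ofAdd, Finset.sum_range_succ]
    by_cases hki : ((k : ℕ) : Fin (q + 1)) = i <;> simp [hki] <;> ring

lemma ups_pow_n {m q : ℕ} : (upsilon m q) ^ (q + 1)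
    = SemidirectProduct.inl (fun _ => Multiplicative.ofAdd (-1 : ZMod m)) := by
  have hleft : ∀ i, ((upsilon m q) ^ (q + 1)).left i
      = Multiplicative.ofAdd (-1 : ZMod m) := by
    intro i
    have := ups_pow_left (m := m) (q := q) (q + 1) i
    have hsum : ∑ s ∈ Finset.range (q + 1),
        (if ((s : ℕ) : Fin (q + 1)) = i then (1 : ZMod m) else 0) = 1 := by
      rw [← Fin.sum_univ_eq_sum_range
        (fun s => if ((s : ℕ) : Fin (q + 1)) = i then (1 : ZMod m) else 0) (q + 1)]
      have : ∀ s : Fin (q + 1),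
          (if ((s.val : ℕ) : Fin (q + 1)) = i then (1 : ZMod m) else 0)
            = if s = i then (1 : ZMod m) else 0 := fun s => by rw [Fin.cast_val_eq_self]
      rw [Finset.sum_congr rfl fun s _ => this s, Finset.sum_ite_eq' Finset.univ i fun _ => (1 : ZMod m)]
      simp
    rw [hsum] at this
    rw [← ofAdd_toAdd (((upsilon m q) ^ (q + 1)).left i), this]
  have hright : ((upsilon m q) ^ (q + 1)).right = 1 := by
    apply Subtype.ext
    rw [ups_right_pow]
    exact finRotate_pow_n
  cases' h : (upsilon m q) ^ (q + 1) with a b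
  congr 1
  · funext i
    have := hleft i
    rw [h] at this
    exact this
  · have := hright
    rw [h] at this
    exact this

lemma ups_inv_pow_inl {m q : ℕ} (j : ℕ) :
    ((upsilon m q)⁻¹) ^ ((q + 1) * j)
      = SemidirectProduct.inl (fun _ => Multiplicative.ofAdd ((j : ZMod m))) := by
  have h1 : ((upsilon m q)⁻¹) ^ ((q + 1) * j) = (((upsilon m q) ^ (q + 1))⁻¹) ^ j := by
    rw [← inv_pow, ← pow_mul]
  rw [h1, ups_pow_n, ← map_inv, ← map_pow]
  congr 1
  funext i
  show ((fun (_ : Fin (q+1)) => Multiplicative.ofAdd (-1 : ZMod m))⁻¹ ^ j) i = _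
  rw [Pi.pow_apply, Pi.inv_apply]
  rw [← ofAdd_neg, neg_neg]
  rw [← ofAdd_nsmul]
  congr 1
  rw [nsmul_eq_mul, mul_one]

lemma mul_inl_const {m q : ℕ} (w : Wgrp m q) (x : Multiplicative (ZMod m)) :
    w * SemidirectProduct.inl (fun _ => x)
      = ⟨fun i => w.left i * x, w.right⟩ :=
  SemidirectProduct.ext rfl (mul_one _)

lemma eqv_iter {m q : ℕ} (k : ℕ) (l : ↥(Lam m q)) (w : Wgrp m q) :
    Relation.EqvGen (balRel m q) (l, w)
      ((tauSub m q)^[k] l, w * ((upsilon m q)⁻¹) ^ k) := by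
  induction k generalizing l w with
  | zero =>
    simpa using Relation.EqvGen.refl (l, w)
  | succ k ih =>
    refine Relation.EqvGen.trans _ _ _
      (Relation.EqvGen.rel _ _ (⟨rfl, rfl⟩ :
        balRel m q (l, w) (tauSub m q l, w * (upsilon m q)⁻¹))) ?_
    have h2 := ih (tauSub m q l) (w * (upsilon m q)⁻¹)
    rw [Function.iterate_succ_apply, pow_succ', ← mul_assoc]
    exact h2

lemma tau_iter {m q : ℕ} (k : ℕ) (p : AddCircle (m : ℝ) × (Fin (q + 1) → ℝ)) :
    (tauMap m q)^[k] p =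
      (p.1 - ((∑ s ∈ Finset.range k, p.2 (Fin.last q - (s : Fin (q + 1))) : ℝ) :
        AddCircle (m : ℝ)), fun i => p.2 (i - (k : Fin (q + 1)))) := by
  induction k with
  | zero => simp
  | succ k ih =>
    rw [Function.iterate_succ_apply', ih, tauMap]
    refine Prod.ext ?_ ?_
    · show p.1 - _ - _ = p.1 - _
      rw [Finset.sum_range_succ, AddCircle.coe_add, sub_sub]
    · funext i
      show p.2 (i - 1 - (k : Fin (q + 1))) = p.2 (i - ((k + 1 : ℕ) : Fin (q + 1)))
      congr 1
      push_cast
      ring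

lemma tau_iter_n {m q : ℕ} {p : AddCircle (m : ℝ) × (Fin (q + 1) → ℝ)} (hp : p ∈ Lam m q) :
    (tauMap m q)^[q + 1] p = (p.1 - ((1 : ℝ) : AddCircle (m : ℝ)), p.2) := by
  rw [tau_iter]
  refine Prod.ext ?_ ?_
  · show p.1 - _ = p.1 - _
    have hsum : ∑ s ∈ Finset.range (q + 1), p.2 (Fin.last q - (s : Fin (q + 1))) = 1 := by
      rw [← Fin.sum_univ_eq_sum_range (fun s => p.2 (Fin.last q - (s : Fin (q + 1)))) (q + 1)]
      have : ∀ s : Fin (q + 1), p.2 (Fin.last q - ((s.val : ℕ) : Fin (q + 1)))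
          = p.2 (Fin.last q - s) := fun s => by rw [Fin.cast_val_eq_self]
      calc ∑ s : Fin (q + 1), p.2 (Fin.last q - ((s.val : ℕ) : Fin (q + 1)))
          = ∑ s : Fin (q + 1), p.2 ((Equiv.subLeft (Fin.last q)) s) :=
            Finset.sum_congr rfl fun s _ => by rw [Equiv.subLeft_apply, Fin.cast_val_eq_self]
        _ = ∑ s, p.2 s := Equiv.sum_comp _ p.2
        _ = 1 := hp.2
    rw [hsum]
  · funext i
    show p.2 (i - ((q + 1 : ℕ) : Fin (q + 1))) = p.2 i
    rw [Fin.natCast_self, sub_zero]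

lemma tau_iter_n_mul {m q : ℕ} (j : ℕ) {p : AddCircle (m : ℝ) × (Fin (q + 1) → ℝ)}
    (hp : p ∈ Lam m q) :
    (tauMap m q)^[(q + 1) * j] p = (p.1 - ((j : ℝ) : AddCircle (m : ℝ)), p.2) := by
  induction j generalizing p with
  | zero => simp
  | succ j ih =>
    rw [Nat.mul_succ, Function.iterate_add_apply, tau_iter_n hp]
    have hp' : (p.1 - ((1 : ℝ) : AddCircle (m : ℝ)), p.2) ∈ Lam m q := ⟨hp.1, hp.2⟩
    rw [ih hp']
    show (p.1 - _ - _, p.2) = _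
    rw [sub_sub, ← AddCircle.coe_add]
    congr 2
    push_cast
    ring

lemma exists_nat_pow {q : ℕ} (g : Perm (Fin (q + 1)))
    (hg : g ∈ Subgroup.zpowers (finRotate (q + 1))) :
    ∃ k : ℕ, (finRotate (q + 1)) ^ k = g := by
  obtain ⟨z, hz⟩ := hg
  refine ⟨(z % (q + 1 : ℤ)).toNat, ?_⟩
  have hmod : (finRotate (q + 1)) ^ (z % (q + 1 : ℤ)) = (finRotate (q + 1)) ^ z := by
    conv_rhs => rw [show z = (q + 1 : ℤ) * (z / (q + 1 : ℤ)) + z % (q + 1 : ℤ) from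
      (Int.mul_ediv_add_emod z (q + 1)).symm]
    rw [zpow_add, zpow_mul]
    have : (finRotate (q + 1)) ^ (q + 1 : ℤ) = 1 := by
      rw [show (q + 1 : ℤ) = ((q + 1 : ℕ) : ℤ) by push_cast; ring, zpow_natCast]
      exact finRotate_pow_n
    rw [this, one_zpow, one_mul]
  rw [← zpow_natCast, Int.toNat_of_nonneg (Int.emod_nonneg z (by positivity)), hmod]
  exact hz

end Helpers4
section Helpers5

lemma coe_cB_zero {m : ℕ} (k : ℕ) : ((2 * Real.pi / m * (k : ℝ) : ℝ) : CircB m) = 0 := by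
  have h0 : ((0 : ℝ) : CircB m) = 0 := by norm_num
  rw [← h0, coe_eq_iff']
  exact ⟨(k : ℤ), by push_cast; ring⟩

lemma pr_add {m : ℕ} (pr : S1 → CircB m)
    (hpr : ∀ s : ℝ, pr ((s : ℝ) : S1) = ((s : ℝ) : CircB m)) (s : S1) (u : ℝ) :
    pr (s + ((u : ℝ) : S1)) = pr s + ((u : ℝ) : CircB m) := by
  obtain ⟨s0, rfl⟩ := exists_lift s
  rw [← AddCircle.coe_add, hpr, hpr, AddCircle.coe_add]

lemma perm_shift {q : ℕ} (k : ℕ) (j : Fin (q + 1)) :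
    (((finRotate (q + 1)) ^ k)⁻¹) (j + 1) = (((finRotate (q + 1)) ^ k)⁻¹) j + 1 := by
  rw [finRotate_pow_inv_apply, finRotate_pow_inv_apply]
  ring

lemma wAct_mem {m q : ℕ} (pr : S1 → CircB m)
    (hpr : ∀ s : ℝ, pr ((s : ℝ) : S1) = ((s : ℝ) : CircB m)) (w : Wgrp m q)
    {x : (Fin (q + 1) → S1) × (Fin (q + 1) → ℝ)} (hx : x ∈ Xn m (q + 1) pr) :
    wAct m q w x ∈ Xn m (q + 1) pr := by
  obtain ⟨hb, hrec, hsum⟩ := hx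
  obtain ⟨k, hk⟩ := exists_nat_pow _ w.right.2
  refine ⟨fun j => hb _, fun j => ?_, ?_⟩
  · have hshift : ((w.right : Perm (Fin (q + 1))))⁻¹ (j + 1)
        = ((w.right : Perm (Fin (q + 1))))⁻¹ j + 1 := by
      rw [← hk]; exact perm_shift k j
    rw [wAct_fst, wAct_fst, wAct_snd, pr_add pr hpr, pr_add pr hpr,
      coe_cB_zero, coe_cB_zero, add_zero, add_zero, hshift]
    exact hrec _
  · show ∑ j, x.2 (((w.right : Perm (Fin (q + 1))))⁻¹ j) = _
    rw [← hsum]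
    exact Equiv.sum_comp ((w.right : Perm (Fin (q + 1)))⁻¹ : Equiv _ _) x.2

lemma F_surj {m q : ℕ} (hm : 1 ≤ m) (pr : S1 → CircB m)
    (hpr : ∀ s : ℝ, pr ((s : ℝ) : S1) = ((s : ℝ) : CircB m))
    (scale : AddCircle (m : ℝ) → S1)
    (hscale : ∀ r : ℝ, scale ((r : ℝ) : AddCircle (m : ℝ)) = ((2 * Real.pi / m * r : ℝ) : S1))
    {x : (Fin (q + 1) → S1) × (Fin (q + 1) → ℝ)} (hx : x ∈ Xn m (q + 1) pr) :
    ∃ (l : ↥(Lam m q)) (w : Wgrp m q), wAct m q w (PhiMap m q scale l.val) = x := by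
  haveI : NeZero m := ⟨by omega⟩
  obtain ⟨hb, hrec, hsum⟩ := hx
  have hc := c_pos hm
  set c := 2 * Real.pi / m with hcdef
  set t : Fin (q + 1) → ℝ := fun j => x.2 j / c with ht
  have hct : ∀ j, c * t j = x.2 j := fun j => by
    rw [ht]; field_simp
  have hmem : (∀ j, 0 ≤ t j) ∧ ∑ j, t j = 1 := by
    constructor
    · intro j; exact div_nonneg (hb j).1 hc.le
    · rw [ht]
      rw [← Finset.sum_div, hsum]
      field_simp
  obtain ⟨s0, hs0⟩ := exists_lift (x.1 0)
  set r := s0 / c with hr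
  have hcr : c * r = s0 := by rw [hr]; field_simp
  have key : ∀ d : ℕ, d ≤ q → ∃ k : ℤ, x.1 ((d : ℕ) : Fin (q + 1))
      = ((c * (r + ∑ i ∈ Finset.range d, t (i : Fin (q + 1)) + k) : ℝ) : S1) := by
    intro d
    induction d with
    | zero =>
      intro _
      refine ⟨0, ?_⟩
      rw [Nat.cast_zero, ← hs0]
      congr 1
      rw [Finset.sum_range_zero]
      push_cast
      rw [mul_add, mul_add, hcr]
      ring
    | succ d ih =>
      intro hd
      obtain ⟨k, hk⟩ := ih (by omega)
      obtain ⟨s1, hs1⟩ := exists_lift (x.1 (((d + 1 : ℕ)) : Fin (q + 1)))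
      have hstep := hrec ((d : ℕ) : Fin (q + 1))
      rw [show ((d : ℕ) : Fin (q + 1)) + 1 = ((d + 1 : ℕ) : Fin (q + 1)) by push_cast; ring,
        ← hs1, hpr, hk, hpr, ← hct, ← AddCircle.coe_add] at hstep
      rw [coe_eq_iff'] at hstep
      obtain ⟨z, hz⟩ := hstep
      refine ⟨k + z, ?_⟩
      rw [← hs1]
      congr 1
      rw [Finset.sum_range_succ]
      rw [← hcdef] at hz
      push_cast at hz ⊢
      linarith [hz]
  have key' : ∀ j : Fin (q + 1), ∃ k : ℤ, x.1 j
      = ((c * (r + ∑ i ∈ Finset.range j.val, t (i : Fin (q + 1)) + k) : ℝ) : S1) := by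
    intro j
    have := key j.val (Nat.le_of_lt_succ j.isLt)
    rwa [Fin.cast_val_eq_self] at this
  choose kk hkk using key'
  refine ⟨⟨(((r : ℝ) : AddCircle (m : ℝ)), t), hmem⟩,
    ⟨fun j => Multiplicative.ofAdd ((kk j : ZMod m)), 1⟩, ?_⟩
  have hwr : ((((⟨fun j => Multiplicative.ofAdd ((kk j : ZMod m)), 1⟩ : Wgrp m q)).right :
      Perm (Fin (q + 1)))) = 1 := rfl
  refine Prod.ext ?_ ?_
  · funext j
    rw [wAct_fst, hwr]
    show (PhiMap m q scale _).1 j + _ = _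
    rw [phi_fst scale hscale]
    have hval : Multiplicative.toAdd
        ((⟨fun j => Multiplicative.ofAdd ((kk j : ZMod m)), 1⟩ : Wgrp m q).left j)
        = ((kk j : ZMod m)) := rfl
    rw [hval, coe_c_val hm ((kk j : ZMod m)) (kk j) rfl, ← AddCircle.coe_add, hkk j]
    congr 1
    ring
  · funext j
    rw [wAct_snd, hwr]
    show c * t j = x.2 j
    exact hct j

lemma F_step {m q : ℕ} (hm : 1 ≤ m) (scale : AddCircle (m : ℝ) → S1)
    (hscale : ∀ r : ℝ, scale ((r : ℝ) : AddCircle (m : ℝ)) = ((2 * Real.pi / m * r : ℝ) : S1))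
    {p p' : ↥(Lam m q) × Wgrp m q} (hrel : balRel m q p p') :
    wAct m q p'.2 (PhiMap m q scale p'.1.val) = wAct m q p.2 (PhiMap m q scale p.1.val) := by
  obtain ⟨h1, h2⟩ := hrel
  rw [h1, h2, phi_tau hm scale hscale _ p.1.prop, ← wAct_mul hm, inv_mul_cancel_right]

lemma F_eqvgen {m q : ℕ} (hm : 1 ≤ m) (scale : AddCircle (m : ℝ) → S1)
    (hscale : ∀ r : ℝ, scale ((r : ℝ) : AddCircle (m : ℝ)) = ((2 * Real.pi / m * r : ℝ) : S1))
    {p p' : ↥(Lam m q) × Wgrp m q} (h : Relation.EqvGen (balRel m q) p p') :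
    wAct m q p.2 (PhiMap m q scale p.1.val) = wAct m q p'.2 (PhiMap m q scale p'.1.val) := by
  induction h with
  | rel a b hab => exact (F_step hm scale hscale hab).symm
  | refl a => rfl
  | symm a b _ ih => exact ih.symm
  | trans a b c _ _ ih1 ih2 => exact ih1.trans ih2

lemma continuous_uncurry_discrete {X Y Z : Type*} [TopologicalSpace X] [TopologicalSpace Y]
    [TopologicalSpace Z] [DiscreteTopology Y] (f : X × Y → Z)
    (hf : ∀ y, Continuous fun x => f (x, y)) : Continuous f := by
  rw [continuous_iff_continuousAt]
  rintro ⟨x, y⟩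
  unfold ContinuousAt
  rw [nhds_prod_eq, nhds_discrete Y, Filter.prod_pure, Filter.tendsto_map'_iff]
  exact ((hf y).tendsto x)

end Helpers5
section Helpers6

lemma F_inj_triv {m q : ℕ} (hm : 1 ≤ m) (scale : AddCircle (m : ℝ) → S1)
    (hscale : ∀ r : ℝ, scale ((r : ℝ) : AddCircle (m : ℝ)) = ((2 * Real.pi / m * r : ℝ) : S1))
    (l l' : ↥(Lam m q)) (w w' : Wgrp m q) (hw : w.right = 1) (hw' : w'.right = 1)
    (h : wAct m q w (PhiMap m q scale l.val) = wAct m q w' (PhiMap m q scale l'.val)) :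
    Relation.EqvGen (balRel m q) (l, w) (l', w') := by
  haveI : NeZero m := ⟨by omega⟩
  have hc := c_pos hm
  have hcm := cm_eq hm
  obtain ⟨⟨ρ, t⟩, hl⟩ := l
  obtain ⟨⟨ρ', t'⟩, hl'⟩ := l'
  obtain ⟨r, rfl⟩ := exists_lift ρ
  obtain ⟨r', rfl⟩ := exists_lift ρ'
  have hwr : ((w.right : Perm (Fin (q + 1)))) = 1 := by rw [hw]; rfl
  have hwr' : ((w'.right : Perm (Fin (q + 1)))) = 1 := by rw [hw']; rfl
  have ht : t = t' := by
    funext j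
    have hj := congrFun (congrArg Prod.snd h) j
    rw [wAct_snd, wAct_snd, hwr, hwr'] at hj
    simp only [inv_one, Equiv.Perm.coe_one, id_eq] at hj
    exact mul_left_cancel₀ hc.ne' hj
  have key : ∀ j : Fin (q + 1), ∃ z : ℤ,
      (r + ((Multiplicative.toAdd (w.left j)).val : ℝ)) -
        (r' + ((Multiplicative.toAdd (w'.left j)).val : ℝ)) = z * m := by
    intro j
    have hj := congrFun (congrArg Prod.fst h) j
    rw [wAct_fst, wAct_fst, hwr, hwr'] at hj
    simp only [inv_one, Equiv.Perm.coe_one, id_eq] at hj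
    rw [phi_fst scale hscale, phi_fst scale hscale, ← AddCircle.coe_add, ← AddCircle.coe_add,
      coe_eq_iff'] at hj
    obtain ⟨z, hz⟩ := hj
    refine ⟨z, ?_⟩
    have hS : ∑ i ∈ Finset.range j.val, t' (i : Fin (q + 1))
        = ∑ i ∈ Finset.range j.val, t (i : Fin (q + 1)) := by rw [ht]
    rw [hS] at hz
    apply mul_left_cancel₀ hc.ne'
    calc 2 * Real.pi / m * ((r + ((Multiplicative.toAdd (w.left j)).val : ℝ))
          - (r' + ((Multiplicative.toAdd (w'.left j)).val : ℝ)))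
        = 2 * Real.pi / m * (r + ∑ i ∈ Finset.range j.val, t (i : Fin (q + 1)))
            + 2 * Real.pi / m * ((Multiplicative.toAdd (w.left j)).val : ℝ)
          - (2 * Real.pi / m * (r' + ∑ i ∈ Finset.range j.val, t (i : Fin (q + 1)))
            + 2 * Real.pi / m * ((Multiplicative.toAdd (w'.left j)).val : ℝ)) := by ring
      _ = z * (2 * Real.pi) := hz
      _ = 2 * Real.pi / m * ((z : ℝ) * m) := by
          rw [show 2 * Real.pi / (m : ℝ) * ((z : ℝ) * (m : ℝ))
            = (z : ℝ) * (2 * Real.pi / (m : ℝ) * (m : ℝ)) from by ring, hcm]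
  obtain ⟨z0, hz0⟩ := key 0
  set J : ℤ := z0 * m - ((Multiplicative.toAdd (w.left 0)).val : ℤ)
      + ((Multiplicative.toAdd (w'.left 0)).val : ℤ) with hJdef
  have hJr : r - r' = (J : ℝ) := by rw [hJdef]; push_cast; linarith [hz0]
  have hJv : ∀ j, Multiplicative.toAdd (w'.left j)
      = Multiplicative.toAdd (w.left j) + (J : ZMod m) := by
    intro j
    obtain ⟨z, hzj⟩ := key j
    have hint : ((Multiplicative.toAdd (w.left j)).val : ℤ)
        - ((Multiplicative.toAdd (w'.left j)).val : ℤ) = z * m - J := by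
      have hre : ((((Multiplicative.toAdd (w.left j)).val : ℤ)
          - ((Multiplicative.toAdd (w'.left j)).val : ℤ) : ℤ) : ℝ)
          = ((z * m - J : ℤ) : ℝ) := by push_cast; linarith [hzj, hJr]
      exact_mod_cast hre
    have h2 := congrArg (fun n : ℤ => (n : ZMod m)) hint
    push_cast [ZMod.natCast_val, ZMod.cast_id, ZMod.natCast_self] at h2
    linear_combination -h2
  rcases le_or_gt 0 J with hJpos | hJneg
  · have e := eqv_iter ((q + 1) * J.toNat)
      (⟨(((r : ℝ) : AddCircle (m : ℝ)), t), hl⟩ : ↥(Lam m q)) w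
    have hcast : ((J.toNat : ℕ) : ℝ) = (J : ℝ) := by
      exact_mod_cast congrArg (Int.cast : ℤ → ℝ) (Int.toNat_of_nonneg hJpos)
    have hcastz : ((J.toNat : ℕ) : ZMod m) = ((J : ℤ) : ZMod m) := by
      exact_mod_cast congrArg (Int.cast : ℤ → ZMod m) (Int.toNat_of_nonneg hJpos)
    have h1 : (tauSub m q)^[(q + 1) * J.toNat]
        (⟨(((r : ℝ) : AddCircle (m : ℝ)), t), hl⟩ : ↥(Lam m q))
        = (⟨(((r' : ℝ) : AddCircle (m : ℝ)), t'), hl'⟩ : ↥(Lam m q)) := by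
      apply Subtype.ext
      rw [tauSub_iter_val, tau_iter_n_mul _ hl]
      refine Prod.ext ?_ ?_
      · show ((r : ℝ) : AddCircle (m : ℝ)) - _ = _
        rw [← AddCircle.coe_sub]
        congr 1
        rw [hcast]
        linarith [hJr]
      · exact ht
    have h2 : w * ((upsilon m q)⁻¹) ^ ((q + 1) * J.toNat) = w' := by
      rw [ups_inv_pow_inl, mul_inl_const]
      refine SemidirectProduct.ext ?_ ?_
      · funext i
        apply Multiplicative.toAdd.injective
        show Multiplicative.toAdd (w.left i * Multiplicative.ofAdd ((J.toNat : ZMod m))) = _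
        rw [toAdd_mul, toAdd_ofAdd, hJv i, hcastz]
      · show w.right = w'.right
        rw [hw, hw']
    rw [h1, h2] at e
    exact e
  · have hJpos' : (0 : ℤ) ≤ -J := by omega
    have e := eqv_iter ((q + 1) * (-J).toNat)
      (⟨(((r' : ℝ) : AddCircle (m : ℝ)), t'), hl'⟩ : ↥(Lam m q)) w'
    have hcast : (((-J).toNat : ℕ) : ℝ) = ((-J : ℤ) : ℝ) := by
      exact_mod_cast congrArg (Int.cast : ℤ → ℝ) (Int.toNat_of_nonneg hJpos')
    have hcastz : (((-J).toNat : ℕ) : ZMod m) = ((-J : ℤ) : ZMod m) := by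
      exact_mod_cast congrArg (Int.cast : ℤ → ZMod m) (Int.toNat_of_nonneg hJpos')
    have h1 : (tauSub m q)^[(q + 1) * (-J).toNat]
        (⟨(((r' : ℝ) : AddCircle (m : ℝ)), t'), hl'⟩ : ↥(Lam m q))
        = (⟨(((r : ℝ) : AddCircle (m : ℝ)), t), hl⟩ : ↥(Lam m q)) := by
      apply Subtype.ext
      rw [tauSub_iter_val, tau_iter_n_mul _ hl']
      refine Prod.ext ?_ ?_
      · show ((r' : ℝ) : AddCircle (m : ℝ)) - _ = _
        rw [← AddCircle.coe_sub]
        congr 1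
        rw [hcast]
        push_cast
        linarith [hJr]
      · exact ht.symm
    have h2 : w' * ((upsilon m q)⁻¹) ^ ((q + 1) * (-J).toNat) = w := by
      rw [ups_inv_pow_inl, mul_inl_const]
      refine SemidirectProduct.ext ?_ ?_
      · funext i
        apply Multiplicative.toAdd.injective
        show Multiplicative.toAdd (w'.left i * Multiplicative.ofAdd (((-J).toNat : ZMod m))) = _
        rw [toAdd_mul, toAdd_ofAdd, hJv i, hcastz]
        push_cast
        ring
      · show w'.right = w.right
        rw [hw, hw']
    rw [h1, h2] at e
    exact Relation.EqvGen.symm _ _ e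

end Helpers6
/-- (i) `Φ` is well defined, continuous and injective;
(ii) `Φ ∘ τ = υ · Φ`;  (iii) `(λ, w) ↦ w · Φ(λ)` descends to a homeomorphism from the
balanced product `(Λ × W)/∼` to `X(q+1)` which is equivariant for the left `W`-actions
and intertwines translation in the circle coordinate of `Λ` by `a ∈ ℝ` with simultaneous
translation of all `ζ_j` by `((2π/m)·a)‾`. -/
theorem stmt_14 (m q : ℕ) (hm : 1 ≤ m)
    (pr : S1 → CircB m) (hpr : ∀ s : ℝ, pr ((s : ℝ) : S1) = ((s : ℝ) : CircB m))
    (scale : AddCircle (m : ℝ) → S1)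
    (hscale : ∀ r : ℝ, scale ((r : ℝ) : AddCircle (m : ℝ)) =
      ((2 * Real.pi / m * r : ℝ) : S1)) :
    -- (i)
    (Set.MapsTo (PhiMap m q scale) (Lam m q) (Xn m (q + 1) pr) ∧
      ContinuousOn (PhiMap m q scale) (Lam m q) ∧
      Set.InjOn (PhiMap m q scale) (Lam m q)) ∧
    -- (ii)
    (∀ p ∈ Lam m q,
      PhiMap m q scale (tauMap m q p) = wAct m q (upsilon m q) (PhiMap m q scale p)) ∧
    -- (iii)
    ∃ e : Quot (balRel m q) ≃ₜ ↥(Xn m (q + 1) pr),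
      (∀ (l : ↥(Lam m q)) (w : Wgrp m q),
        (e (Quot.mk _ (l, w))).val = wAct m q w (PhiMap m q scale l.val)) ∧
      (∀ (w' : Wgrp m q) (l : ↥(Lam m q)) (w : Wgrp m q),
        (e (Quot.mk _ (l, w' * w))).val = wAct m q w' (e (Quot.mk _ (l, w))).val) ∧
      (∀ (a : ℝ) (l : ↥(Lam m q)) (w : Wgrp m q),
        (e (Quot.mk _ (⟨(l.val.1 + ((a : ℝ) : AddCircle (m : ℝ)), l.val.2), l.prop⟩,
            w))).val =
          (fun j => (e (Quot.mk _ (l, w))).val.1 j + ((2 * Real.pi / m * a : ℝ) : S1),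
            (e (Quot.mk _ (l, w))).val.2)) := by
  haveI : NeZero m := ⟨by omega⟩
  haveI : Fact (0 < ((m : ℕ) : ℝ)) := ⟨by exact_mod_cast hm⟩
  have hscaleCont : Continuous scale := by
    have hq := QuotientAddGroup.isQuotientMap_mk (AddSubgroup.zmultiples ((m : ℕ) : ℝ))
    rw [hq.continuous_iff]
    have heq : (scale ∘ QuotientAddGroup.mk) = fun r : ℝ => ((2 * Real.pi / m * r : ℝ) : S1) :=
      funext fun r => hscale r
    rw [heq]
    exact (AddCircle.continuous_mk' _).comp (continuous_const.mul continuous_id)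
  have hPhiCont : Continuous (PhiMap m q scale) := by
    refine Continuous.prodMk ?_ ?_
    · refine continuous_pi fun j => Continuous.add ?_ ?_
      · exact hscaleCont.comp continuous_fst
      · exact (AddCircle.continuous_mk' _).comp
          (continuous_const.mul (continuous_finset_sum _ fun i _ =>
            (continuous_apply i).comp continuous_snd))
    · exact continuous_pi fun j =>
        continuous_const.mul ((continuous_apply j).comp continuous_snd)
  have hMapsTo := phi_mapsTo (q := q) hm pr hpr scale hscale
  have hInjOn := phi_injOn (q := q) hm scale hscale
  have hTau := phi_tau (q := q) hm scale hscale
  refine ⟨⟨hMapsTo, hPhiCont.continuousOn, hInjOn⟩, hTau, ?_⟩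
  haveI : DiscreteTopology (Wgrp m q) := ⟨rfl⟩
  haveI : Finite (Wgrp m q) := by
    have hinj : Function.Injective (fun w : Wgrp m q => (w.left, w.right)) := by
      intro a b hab
      exact SemidirectProduct.ext (congrArg Prod.fst hab) (congrArg Prod.snd hab)
    exact Finite.of_injective _ hinj
  have hLamClosed : IsClosed (Lam m q) := by
    have h1 : Lam m q = (⋂ j, {p : AddCircle ((m : ℕ) : ℝ) × (Fin (q + 1) → ℝ) | 0 ≤ p.2 j})
        ∩ {p | ∑ j, p.2 j = 1} := by
      ext p
      simp only [Lam, Set.mem_setOf_eq, Set.mem_inter_iff, Set.mem_iInter]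
    rw [h1]
    refine IsClosed.inter (isClosed_iInter fun j => ?_) ?_
    · exact isClosed_le continuous_const ((continuous_apply j).comp continuous_snd)
    · exact isClosed_eq (continuous_finset_sum _ fun j _ =>
        (continuous_apply j).comp continuous_snd) continuous_const
  have hLamCompact : IsCompact (Lam m q) := by
    refine IsCompact.of_isClosed_subset
      ((isCompact_univ).prod (isCompact_univ_pi fun _ : Fin (q + 1) =>
        isCompact_Icc (a := (0 : ℝ)) (b := 1))) hLamClosed ?_
    rintro ⟨ρ, t⟩ ⟨h0, h1⟩
    refine ⟨Set.mem_univ _, ?_⟩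
    intro j _
    exact ⟨h0 j, lam_le_one h0 h1 j⟩
  haveI : CompactSpace ↥(Lam m q) := isCompact_iff_compactSpace.mp hLamCompact
  let G : ↥(Lam m q) × Wgrp m q → ↥(Xn m (q + 1) pr) := fun p =>
    ⟨wAct m q p.2 (PhiMap m q scale p.1.val), wAct_mem pr hpr p.2 (hMapsTo p.1.prop)⟩
  have hGrel : ∀ p p', balRel m q p p' → G p = G p' := fun p p' hrel =>
    Subtype.ext (F_step hm scale hscale hrel).symm
  let f : Quot (balRel m q) → ↥(Xn m (q + 1) pr) := Quot.lift G hGrel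
  have hGcont : Continuous G := by
    refine Continuous.subtype_mk ?_ _
    refine continuous_uncurry_discrete _ fun w => ?_
    have hwc : Continuous (wAct m q w) := by
      unfold wAct
      refine Continuous.prodMk ?_ ?_
      · exact continuous_pi fun j =>
          ((continuous_apply _).comp continuous_fst).add continuous_const
      · exact continuous_pi fun j => (continuous_apply _).comp continuous_snd
    exact hwc.comp (hPhiCont.comp continuous_subtype_val)
  have hfCont : Continuous f := continuous_quot_lift _ hGcont
  have hfval : ∀ (l : ↥(Lam m q)) (w : Wgrp m q),
      (f (Quot.mk (balRel m q) (l, w))).val = wAct m q w (PhiMap m q scale l.val) :=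
    fun l w => by simp only [f, G]
  have hfSurj : Function.Surjective f := by
    rintro ⟨x, hx⟩
    obtain ⟨l, w, hlw⟩ := F_surj hm pr hpr scale hscale hx
    exact ⟨Quot.mk _ (l, w), Subtype.ext ((hfval l w).trans hlw)⟩
  have hinvright : ∀ n : ℕ, ((((upsilon m q)⁻¹ ^ n).right : Perm (Fin (q + 1))))
      = (((finRotate (q + 1)) ^ n)⁻¹) := by
    intro n
    rw [inv_pow, SemidirectProduct.inv_right]
    have := ups_right_pow (m := m) (q := q) n
    rw [← this]
    simp
  have hfInj : Function.Injective f := by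
    intro a b hab
    obtain ⟨⟨l, w⟩, rfl⟩ := Quot.exists_rep a
    obtain ⟨⟨l', w'⟩, rfl⟩ := Quot.exists_rep b
    have hF : wAct m q w (PhiMap m q scale l.val) = wAct m q w' (PhiMap m q scale l'.val) :=
      (hfval l w).symm.trans ((congrArg Subtype.val hab).trans (hfval l' w'))
    apply Quot.eqvGen_sound
    obtain ⟨k, hk⟩ := exists_nat_pow _ w.right.2
    obtain ⟨k', hk'⟩ := exists_nat_pow _ w'.right.2
    have e1 := eqv_iter k l w
    have e2 := eqv_iter k' l' w'
    have hr1 : (w * ((upsilon m q)⁻¹) ^ k).right = 1 := by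
      apply Subtype.ext
      rw [SemidirectProduct.mul_right]
      show ((w.right : Perm (Fin (q + 1))) *
        ((((upsilon m q)⁻¹ ^ k)).right : Perm (Fin (q + 1)))) = 1
      rw [hinvright, hk, mul_inv_cancel]
    have hr2 : (w' * ((upsilon m q)⁻¹) ^ k').right = 1 := by
      apply Subtype.ext
      rw [SemidirectProduct.mul_right]
      show ((w'.right : Perm (Fin (q + 1))) *
        ((((upsilon m q)⁻¹ ^ k')).right : Perm (Fin (q + 1)))) = 1
      rw [hinvright, hk', mul_inv_cancel]
    have hF1 := F_eqvgen hm scale hscale e1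
    have hF2 := F_eqvgen hm scale hscale e2
    have hmid := F_inj_triv hm scale hscale _ _ _ _ hr1 hr2
      (by rw [← hF1, ← hF2]; exact hF)
    exact Relation.EqvGen.trans _ _ _ e1
      (Relation.EqvGen.trans _ _ _ hmid (Relation.EqvGen.symm _ _ e2))
  let E : Quot (balRel m q) ≃ ↥(Xn m (q + 1) pr) := Equiv.ofBijective f ⟨hfInj, hfSurj⟩
  have hEcont : Continuous ⇑E := hfCont
  let e : Quot (balRel m q) ≃ₜ ↥(Xn m (q + 1) pr) := hEcont.homeoOfEquivCompactToT2
  have heval : ∀ (l : ↥(Lam m q)) (w : Wgrp m q),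
      (e (Quot.mk _ (l, w))).val = wAct m q w (PhiMap m q scale l.val) := fun l w => hfval l w
  refine ⟨e, heval, ?_, ?_⟩
  · intro w' l w
    rw [heval, heval, wAct_mul hm]
  · intro a l w
    rw [heval, heval]
    obtain ⟨⟨ρ, t⟩, hl⟩ := l
    obtain ⟨r, rfl⟩ := exists_lift ρ
    have h1 : ((r : ℝ) : AddCircle ((m : ℕ) : ℝ)) + ((a : ℝ) : AddCircle ((m : ℕ) : ℝ))
        = (((r + a : ℝ) : ℝ) : AddCircle ((m : ℕ) : ℝ)) := by rw [AddCircle.coe_add]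
    show wAct m q w (PhiMap m q scale (((r : ℝ) : AddCircle ((m : ℕ) : ℝ)) +
      ((a : ℝ) : AddCircle ((m : ℕ) : ℝ)), t)) = _
    rw [h1]
    refine Prod.ext ?_ ?_
    · funext j
      rw [wAct_fst]
      show _ = (wAct m q w (PhiMap m q scale (((r : ℝ) : AddCircle ((m : ℕ) : ℝ)), t))).1 j
        + ((2 * Real.pi / m * a : ℝ) : S1)
      rw [wAct_fst, phi_fst scale hscale, phi_fst scale hscale]
      rw [← AddCircle.coe_add, ← AddCircle.coe_add, ← AddCircle.coe_add]
      congr 1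
      ring
    · funext j
      rfl

end Stmt14

end
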